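/- Let T be a tree with colouring ω, let S₀ be any sequence of moves flooding T, and let U be a set of leaves of T such that playing the subsequence S₀′ of S₀ consisting of moves that change the colour of some non-leaf vertex makes T \ U monochromatic. Then T can be flooded by a sequence of length at most |S₀′| + |col(U, ω)|, where col(U, ω) is the set of colours assigned by ω to vertices of U. -/

import Mathlib

noncomputable section

variable {V C : Type*}

/-- The monochromatic component of `v`: vertices reachable from `v` through
vertices of the same colour. -/
def monoComp (G : SimpleGraph V) (ω : V → C) (v : V) : Set V :=
  {u | Relation.ReflTransGen (fun a b => G.Adj a b ∧ ω a = ω b) v u}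

open Classical in
/-- Playing the single flood move `mv = (v, d)`: the monochromatic component of
`v` receives colour `d`. -/
def floodMove (G : SimpleGraph V) (ω : V → C) (mv : V × C) : V → C :=
  fun u => if u ∈ monoComp G ω mv.1 then mv.2 else ω u

/-- Playing a sequence of flood moves. -/
def play (G : SimpleGraph V) : (V → C) → List (V × C) → (V → C)
  | ω, [] => ω
  | ω, mv :: S => play G (floodMove G ω mv) S

/-- A sequence `S` floods `G` with colour `d` if after playing it every vertex
has colour `d`. -/
def Floods (G : SimpleGraph V) (ω : V → C) (S : List (V × C)) (d : C) : Prop :=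
  ∀ u, play G ω S u = d

/-- `m(G, ω, d)`: the minimum number of moves needed to make `G`
monochromatic in colour `d`. -/
def floodNum (G : SimpleGraph V) (ω : V → C) (d : C) : ℕ :=
  sInf {k | ∃ S : List (V × C), S.length = k ∧ Floods G ω S d}

/-- `m(G, ω)`: the minimum number of moves needed to make `G` monochromatic. -/
def floodNumMin (G : SimpleGraph V) (ω : V → C) : ℕ :=
  sInf {k | ∃ (S : List (V × C)) (d : C), S.length = k ∧ Floods G ω S d}

open Classical in
/-- The subsequence of moves of `S` played in the vertex set `A`, viewed as
moves of the induced subgraph on `A`. -/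
def restrictMoves (A : Set V) (S : List (V × C)) : List (↥A × C) :=
  S.filterMap (fun mv => if h : mv.1 ∈ A then some (⟨mv.1, h⟩, mv.2) else none)

/-- Moves of an induced subgraph on `A`, viewed as moves of the ambient graph. -/
def liftMoves (A : Set V) (S : List (↥A × C)) : List (V × C) :=
  S.map (fun mv => ((mv.1 : V), mv.2))

end

section helpers

open Classical

variable {V C : Type*}

lemma play_append (G : SimpleGraph V) (ω : V → C) (S S' : List (V × C)) :
    play G ω (S ++ S') = play G (play G ω S) S' := by
  induction S generalizing ω with
  | nil => rfl
  | cons mv S ih => simp only [List.cons_append, play]; exact ih _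

lemma monoComp_colour (G : SimpleGraph V) (ω : V → C) (v : V) :
    ∀ x ∈ monoComp G ω v, ω x = ω v := by
  intro x hx
  induction hx with
  | refl => rfl
  | tail _ h ih => rw [← h.2]; exact ih

lemma reach_two (T : SimpleGraph V) (u w : V) (hu : ∀ x, T.Adj u x → x = w)
    (hw : ∀ x, T.Adj w x → x = u) :
    ∀ (a b : V) (p : T.Walk a b), a = u ∨ a = w → b = u ∨ b = w := by
  intro a b p
  induction p with
  | nil => exact id
  | @cons a x b h q ih =>
    intro ha
    apply ih
    rcases ha with rfl | rfl
    · right; exact hu _ h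
    · left; exact hw _ h

lemma nbr_not_mem (T : SimpleGraph V) (hconn : T.Connected) (U : Set V)
    (hU : ∀ u ∈ U, ∃! w, T.Adj u w) (v₀ : V) (hv₀ : v₀ ∉ U)
    {u w : V} (huU : u ∈ U) (hw : T.Adj u w) : w ∉ U := by
  intro hwU
  obtain ⟨w₁, _, hun₁⟩ := hU u huU
  obtain ⟨w₂, _, hun₂⟩ := hU w hwU
  have hu1 : ∀ x, T.Adj u x → x = w := fun x hx => (hun₁ x hx).trans (hun₁ w hw).symm
  have hu2 : ∀ x, T.Adj w x → x = u := fun x hx => (hun₂ x hx).trans (hun₂ u hw.symm).symm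
  obtain ⟨p⟩ := hconn.preconnected u v₀
  rcases reach_two T u w hu1 hu2 u v₀ p (Or.inl rfl) with rfl | rfl
  · exact hv₀ huU
  · exact hv₀ hwU

lemma walk_chain (T : SimpleGraph V) (U : Set V) (hU : ∀ u ∈ U, ∃! w, T.Adj u w)
    (ψ : V → C) (cur : C) (hψ : ∀ x ∉ U, ψ x = cur) :
    ∀ (a b : V) (p : T.Walk a b), p.IsPath → a ∉ U → b ∉ U →
      Relation.ReflTransGen (fun x y => T.Adj x y ∧ ψ x = ψ y) a b := by
  intro a b p
  induction p with
  | nil => intro _ _ _; exact Relation.ReflTransGen.refl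
  | @cons a x b h q ih =>
    intro hp ha hb
    have hxU : x ∉ U := by
      cases q with
      | nil => exact hb
      | @cons _ y _ h' q' =>
        intro hxU
        obtain ⟨z, _, hunz⟩ := hU x hxU
        have hay : a = y := (hunz a h.symm).trans (hunz y h').symm
        have hp' := (SimpleGraph.Walk.cons_isPath_iff _ _).mp hp
        apply hp'.2
        rw [hay, SimpleGraph.Walk.support_cons]
        exact List.mem_cons_of_mem _ q'.start_mem_support
    have hr : T.Adj a x ∧ ψ a = ψ x := ⟨h, by rw [hψ a ha, hψ x hxU]⟩
    exact Relation.ReflTransGen.head hr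
      (ih ((SimpleGraph.Walk.cons_isPath_iff _ _).mp hp).1 hxU hb)

lemma leaf_invariant (T : SimpleGraph V) (ω : V → C) (S : List (V × C))
    (u w : V) (hw : T.Adj u w) (huniq : ∀ x, T.Adj u x → x = w)
    (hchg : ∀ i < S.length, ∃ v : V, ¬ (∃! w, T.Adj v w) ∧
      play T ω (S.take (i + 1)) v ≠ play T ω (S.take i) v) :
    ∀ i ≤ S.length,
      play T ω (S.take i) u = ω u ∨ play T ω (S.take i) u = play T ω (S.take i) w := by
  intro i
  induction i with
  | zero => intro _; left; simp [play]
  | succ i ih =>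
    intro hi
    have hi' : i < S.length := hi
    set ωi := play T ω (S.take i) with hωi
    have htake : ∀ x : V, play T ω (S.take (i + 1)) x = floodMove T ωi (S[i]) x := by
      intro x
      rw [List.take_succ, List.getElem?_eq_getElem hi', play_append]
      rfl
    obtain ⟨v, hvnl, hvne⟩ := hchg i hi'
    rw [htake v] at hvne
    have hv_in : v ∈ monoComp T ωi (S[i]).1 := by
      by_contra hcon
      exact hvne (by simp [floodMove, hcon]; rfl)
    have hsymm : Symmetric (fun a b => T.Adj a b ∧ ωi a = ωi b) :=
      fun a b hab => ⟨hab.1.symm, hab.2.symm⟩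
    by_cases hu_in : u ∈ monoComp T ωi (S[i]).1
    · -- w is also in the component
      have hvu : v ≠ u := by
        intro h; subst h; exact hvnl ⟨w, hw, huniq⟩
      have huv : Relation.ReflTransGen (fun a b => T.Adj a b ∧ ωi a = ωi b) u v :=
        haveI : Std.Symm (fun a b => T.Adj a b ∧ ωi a = ωi b) := ⟨fun a b h => hsymm h⟩; Relation.ReflTransGen.trans (Std.Symm.symm _ _ (show Relation.ReflTransGen (fun a b => T.Adj a b ∧ ωi a = ωi b) _ u from hu_in)) hv_in
      rcases huv.cases_head with h | ⟨x, hx, _⟩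
      · exact absurd h.symm hvu
      · have hxw : x = w := huniq x hx.1
        have hx' : T.Adj u w ∧ ωi u = ωi w := hxw ▸ hx
        have hw_in : w ∈ monoComp T ωi (S[i]).1 :=
          Relation.ReflTransGen.tail hu_in hx'
        right
        rw [htake u, htake w]
        simp [floodMove, hu_in, hw_in]
    · rcases ih (le_of_lt hi') with h | h
      · left; rw [htake u]; simpa [floodMove, hu_in] using h
      · have hw_out : w ∉ monoComp T ωi (S[i]).1 := by
          intro hw_in
          exact hu_in (Relation.ReflTransGen.tail hw_in ⟨hw.symm, h.symm⟩)
        right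
        rw [htake u, htake w]
        simpa [floodMove, hu_in, hw_out] using h

lemma cycle (T : SimpleGraph V) (hconn : T.Connected)
    (U : Set V) (hU : ∀ u ∈ U, ∃! w, T.Adj u w)
    (v₀ : V) (hv₀ : v₀ ∉ U)
    (ω' : V → C) (c : C) (hmono : ∀ v ∉ U, ω' v = c) :
    ∀ (L : List C) (ψ : V → C) (cur : C) (A : Set C),
      c ∈ A → cur ∈ A →
      (∀ v, ω' v ∈ A → ψ v = cur) → (∀ v, ω' v ∉ A → ψ v = ω' v) →
      (∀ e ∈ L, e ∉ A) → L.Nodup →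
      ∃ cur', (∀ v, ω' v ∈ A ∪ {x | x ∈ L} →
          play T ψ (L.map fun e => (v₀, e)) v = cur') ∧
        (∀ v, ω' v ∉ A ∪ {x | x ∈ L} →
          play T ψ (L.map fun e => (v₀, e)) v = ω' v) := by
  intro L
  induction L with
  | nil =>
    intro ψ cur A hcA hcurA h1 h2 _ _
    exact ⟨cur, by simpa [play] using h1, by simpa [play] using h2⟩
  | cons e L ih =>
    intro ψ cur A hcA hcurA h1 h2 hnot hnd
    have hψv₀ : ψ v₀ = cur := h1 v₀ (by rw [hmono v₀ hv₀]; exact hcA)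
    have chain : ∀ x, x ∉ U → x ∈ monoComp T ψ v₀ := by
      intro x hx
      obtain ⟨q⟩ := hconn.preconnected v₀ x
      exact walk_chain T U hU ψ cur
        (fun y hy => h1 y (by rw [hmono y hy]; exact hcA))
        v₀ x q.toPath.1 q.toPath.2 hv₀ hx
    have cov : ∀ v, ω' v ∈ A → v ∈ monoComp T ψ v₀ := by
      intro v hvA
      by_cases hvU : v ∈ U
      · obtain ⟨w, hw, _⟩ := hU v hvU
        have hwU : w ∉ U := nbr_not_mem T hconn U hU v₀ hv₀ hvU hw
        have hwcomp : w ∈ monoComp T ψ v₀ := chain w hwU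
        refine Relation.ReflTransGen.tail hwcomp ⟨hw.symm, ?_⟩
        rw [h1 v hvA, h1 w (by rw [hmono w hwU]; exact hcA)]
      · exact chain v hvU
    have heA : e ∉ A := hnot e List.mem_cons_self
    have h1' : ∀ v, ω' v ∈ insert e A → floodMove T ψ (v₀, e) v = e := by
      intro v hv
      rcases Set.mem_insert_iff.mp hv with hv | hv
      · have := h2 v (by rw [hv]; exact heA)
        by_cases hc : v ∈ monoComp T ψ v₀
        · simp [floodMove, hc]
        · simp [floodMove, hc, this, hv]
      · simp [floodMove, cov v hv]
    have h2' : ∀ v, ω' v ∉ insert e A → floodMove T ψ (v₀, e) v = ω' v := by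
      intro v hv
      have hvA : ω' v ∉ A := fun h => hv (Set.mem_insert_of_mem _ h)
      have hc : v ∉ monoComp T ψ v₀ := by
        intro hc
        have := monoComp_colour T ψ v₀ v hc
        rw [h2 v hvA, hψv₀] at this
        exact hvA (this ▸ hcurA)
      simp [floodMove, hc, h2 v hvA]
    obtain ⟨cur', hc1, hc2⟩ := ih (floodMove T ψ (v₀, e)) e (insert e A)
      (Set.mem_insert_of_mem _ hcA) (Set.mem_insert _ _) h1' h2'
      (fun e' he' hmem => by
        rcases Set.mem_insert_iff.mp hmem with h | h
        · exact (List.nodup_cons.mp hnd).1 (h ▸ he')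
        · exact hnot e' (List.mem_cons_of_mem _ he') h)
      (List.nodup_cons.mp hnd).2
    have hset : A ∪ {x | x ∈ e :: L} = insert e A ∪ {x | x ∈ L} := by
      ext x; simp [List.mem_cons, Set.mem_insert_iff]; tauto
    refine ⟨cur', ?_, ?_⟩
    · intro v hv
      rw [hset] at hv
      exact hc1 v hv
    · intro v hv
      rw [hset] at hv
      exact hc2 v hv

end helpers


/-- let `S₀` flood the tree `T`, let `S₀'` be the subsequence of
`S₀` consisting of moves that change the colour of some non-leaf vertex (in
particular, each move of `S₀'` changes the colour of some non-leaf vertex), and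
let `U` be a set of leaves such that playing `S₀'` makes `T \ U` monochromatic.
Then `T` can be flooded by a sequence of length at most `|S₀'| + |col(U, ω)|`. -/
theorem stmt6 {V C : Type*} [Fintype V] (T : SimpleGraph V) (hT : T.IsTree)
    (ω : V → C) (S₀ : List (V × C)) (d₀ : C) (hS₀ : Floods T ω S₀ d₀)
    (S₀' : List (V × C)) (hsub : S₀'.Sublist S₀)
    (hchg : ∀ i < S₀'.length, ∃ v : V, ¬ (∃! w, T.Adj v w) ∧
      play T ω (S₀'.take (i + 1)) v ≠ play T ω (S₀'.take i) v)
    (U : Set V) (hU : ∀ u ∈ U, ∃! w, T.Adj u w)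
    (c : C) (hmono : ∀ v ∉ U, play T ω S₀' v = c) :
    ∃ (S : List (V × C)) (d : C), Floods T ω S d ∧
      S.length ≤ S₀'.length + (ω '' U).ncard := by
  classical
  have hconn : T.Connected := hT.isConnected
  by_cases hv₀ : ∃ v₀, v₀ ∉ U
  · obtain ⟨v₀, hv₀⟩ := hv₀
    set ω' := play T ω S₀' with hω'
    -- Lemma A: every leaf of U keeps its colour or ends with colour c
    have hA : ∀ u ∈ U, ω' u = ω u ∨ ω' u = c := by
      intro u huU
      obtain ⟨w, hw, hun⟩ := hU u huU
      have := leaf_invariant T ω S₀' u w hw (fun x hx => hun x hx) hchg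
        S₀'.length le_rfl
      rw [List.take_length] at this
      rcases this with h | h
      · exact Or.inl h
      · right
        have h' : ω' u = ω' w := h
        rw [h']
        exact hmono w (nbr_not_mem T hconn U hU v₀ hv₀ huU hw)
    set D : Set C := (ω' '' U) \ {c} with hD
    have hDfin : D.Finite := ((Set.toFinite U).image ω').diff (t := {c})
    set L : List C := hDfin.toFinset.toList with hL
    have hLmem : ∀ e, e ∈ L ↔ e ∈ D := by
      intro e; rw [hL, Finset.mem_toList, Set.Finite.mem_toFinset]
    have hLnd : L.Nodup := Finset.nodup_toList _
    have hLlen : L.length = D.ncard := by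
      rw [hL, Finset.length_toList, Set.ncard_eq_toFinset_card D hDfin]
    obtain ⟨cur', hc1, _⟩ := cycle T hconn U hU v₀ hv₀ ω' c hmono L ω' c {c}
      rfl rfl (fun v hv => hv) (fun v _ => rfl)
      (fun e he hmem => ((hLmem e).mp he).2 hmem) hLnd
    refine ⟨S₀' ++ L.map fun e => (v₀, e), cur', ?_, ?_⟩
    · intro v
      rw [play_append, ← hω']
      apply hc1
      by_cases hvU : v ∈ U
      · by_cases hc' : ω' v = c
        · exact Or.inl hc'
        · exact Or.inr ((hLmem _).mpr ⟨⟨v, hvU, rfl⟩, hc'⟩)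
      · exact Or.inl (hmono v hvU)
    · rw [List.length_append, List.length_map, hLlen]
      have hsubD : D ⊆ ω '' U := by
        rintro e ⟨⟨v, hv, rfl⟩, hne⟩
        rcases hA v hv with h | h
        · exact ⟨v, hv, h.symm⟩
        · exact absurd h hne
      exact Nat.add_le_add_left (Set.ncard_le_ncard hsubD (Set.toFinite _)) _
  · -- degenerate case: U = univ, so all vertices are leaves and |V| ≤ 2
    push_neg at hv₀
    obtain ⟨a⟩ := hconn.nonempty
    obtain ⟨w, hw, hun⟩ := hU a (hv₀ a)
    obtain ⟨w₂, _, hun₂⟩ := hU w (hv₀ w)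
    have hu1 : ∀ x, T.Adj a x → x = w := fun x hx => hun x hx
    have hu2 : ∀ x, T.Adj w x → x = a := fun x hx => (hun₂ x hx).trans (hun₂ a hw.symm).symm
    refine ⟨[(a, ω w)], ω w, ?_, ?_⟩
    · intro x
      obtain ⟨p⟩ := hconn.preconnected a x
      have hx2 := reach_two T a w hu1 hu2 a x p (Or.inl rfl)
      have hplay : play T ω [(a, ω w)] x = floodMove T ω (a, ω w) x := rfl
      rcases hx2 with h | h
      · rw [hplay, h]
        have ha_in : a ∈ monoComp T ω (a, ω w).1 := Relation.ReflTransGen.refl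
        simp [floodMove, ha_in]
      · rw [hplay, h]
        by_cases hc : w ∈ monoComp T ω (a, ω w).1 <;> simp [floodMove, hc]
    · have h1 : 1 ≤ (ω '' U).ncard := by
        rw [Nat.one_le_iff_ne_zero]
        intro h
        have : (ω '' U).Nonempty := ⟨ω a, a, hv₀ a, rfl⟩
        rw [← Set.ncard_pos (Set.toFinite _)] at this
        omega
      have hlen : ([(a, ω w)] : List (V × C)).length = 1 := rfl
      omega
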